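/- Let k ≥ 2 and identify the vertices of K_{2k}^{(3)} with Z_{2k}. For a 3-set A = {0, b, c} with 0 < b < k < c < 2k, c ≠ k, and c ≠ b + k (no two points opposite), A is an edge of exactly three of the hypergraphs H_0, ..., H_{k−1} if k < c < k + b, and exactly one of them otherwise. -/
import Mathlib


open Finset

/-- `e` is an edge of the complete `r`-partite `r`-graph with parts `P 0, ..., P (r-1)`:
it meets every part in exactly one vertex. -/
def IsEdge {α : Type*} [DecidableEq α] {r : ℕ} (P : Fin r → Finset α) (e : Finset α) : Prop :=
  ∀ i, (e ∩ P i).card = 1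

instance {α : Type*} [DecidableEq α] {r : ℕ} (P : Fin r → Finset α) (e : Finset α) :
    Decidable (IsEdge P e) :=
  inferInstanceAs (Decidable (∀ _, _))

/-- The circular construction `H_i` on `ZMod (2k)`: parts `{i, i+k}`,
`{i+1, ..., i+k-1}` and `{i+k+1, ..., i-1}`. -/
def circPart (k : ℕ) (i : ZMod (2 * k)) : Fin 3 → Finset (ZMod (2 * k)) :=
  ![{i, i + (k : ZMod (2 * k))},
    (Finset.Ico 1 k).image fun j : ℕ => i + (j : ZMod (2 * k)),
    (Finset.Ico (k + 1) (2 * k)).image fun j : ℕ => i + (j : ZMod (2 * k))]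

lemma cast_inj_aux {k x y : ℕ} (hx : x < 2*k) (hy : y < 2*k) :
    ((x : ZMod (2*k)) = y) ↔ x = y := by
  haveI : NeZero (2*k) := ⟨by omega⟩
  constructor
  · intro h
    have h2 := congrArg ZMod.val h
    rwa [ZMod.val_cast_of_lt hx, ZMod.val_cast_of_lt hy] at h2
  · rintro rfl; rfl

lemma mem_P0_aux {k i x : ℕ} (hi : i < k) (hx : x < 2*k) :
    ((x : ZMod (2*k)) ∈ ({(i : ZMod (2*k)), (i : ZMod (2*k)) + (k : ZMod (2*k))} : Finset (ZMod (2*k)))) ↔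
      (x = i ∨ x = i + k) := by
  simp only [Finset.mem_insert, Finset.mem_singleton, ← Nat.cast_add]
  rw [cast_inj_aux hx (by omega), cast_inj_aux hx (by omega)]

lemma mem_P1_aux {k i x : ℕ} (hi : i < k) (hx : x < 2*k) :
    ((x : ZMod (2*k)) ∈ (Finset.Ico 1 k).image (fun j : ℕ => (i : ZMod (2*k)) + (j : ZMod (2*k)))) ↔
      (i < x ∧ x < i + k) := by
  simp only [Finset.mem_image, Finset.mem_Ico]
  constructor
  · rintro ⟨j, ⟨h1, h2⟩, hj⟩
    rw [← Nat.cast_add] at hj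
    have := (cast_inj_aux (k := k) (by omega) hx).mp hj
    omega
  · intro ⟨h1, h2⟩
    exact ⟨x - i, ⟨by omega, by omega⟩, by rw [← Nat.cast_add]; congr 1; omega⟩

lemma mem_P2_aux {k i x : ℕ} (hi : i < k) (hx : x < 2*k) :
    ((x : ZMod (2*k)) ∈ (Finset.Ico (k+1) (2*k)).image (fun j : ℕ => (i : ZMod (2*k)) + (j : ZMod (2*k)))) ↔
      (i + k < x ∨ x < i) := by
  simp only [Finset.mem_image, Finset.mem_Ico]
  constructor
  · rintro ⟨j, ⟨h1, h2⟩, hj⟩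
    rw [← Nat.cast_add] at hj
    by_cases hlt : i + j < 2*k
    · have := (cast_inj_aux hlt hx).mp hj
      omega
    · have e2 : ((i + j : ℕ) : ZMod (2*k)) = ((i + j - 2*k : ℕ) : ZMod (2*k)) := by
        have h3 : (i + j - 2*k) + 2*k = i + j := by omega
        conv_lhs => rw [← h3]
        rw [Nat.cast_add, ZMod.natCast_self, add_zero]
      rw [e2] at hj
      have := (cast_inj_aux (k := k) (by omega) hx).mp hj
      omega
  · intro h
    rcases h with h | h
    · exact ⟨x - i, ⟨by omega, by omega⟩, by rw [← Nat.cast_add]; congr 1; omega⟩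
    · refine ⟨x + 2*k - i, ⟨by omega, by omega⟩, ?_⟩
      rw [← Nat.cast_add, show i + (x + 2*k - i) = x + 2*k by omega, Nat.cast_add,
        ZMod.natCast_self, add_zero]

lemma card_inter_triple {α : Type*} [DecidableEq α] {x y z : α} (hxy : x ≠ y) (hxz : x ≠ z)
    (hyz : y ≠ z) (s : Finset α) :
    (({x, y, z} : Finset α) ∩ s).card =
      (if x ∈ s then 1 else 0) + (if y ∈ s then 1 else 0) + (if z ∈ s then 1 else 0) := by
  rw [← Finset.filter_mem_eq_inter, Finset.card_filter]
  rw [show ({x, y, z} : Finset α) = insert x (insert y {z}) from rfl,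
    Finset.sum_insert (by simp [hxy, hxz]), Finset.sum_insert (by simp [hyz]),
    Finset.sum_singleton]
  ring

set_option maxHeartbeats 3200000 in
lemma edge_char {k b c i : ℕ} (hk : 2 ≤ k) (hi : i < k) (hb0 : 0 < b) (hbk : b < k)
    (hkc : k < c) (hc : c < 2*k) :
    (IsEdge (circPart k (i : ZMod (2*k)))
        {(0 : ZMod (2*k)), (b : ZMod (2*k)), (c : ZMod (2*k))}) ↔
      (i = 0 ∨ ((i = b ∨ i + k = c) ∧ c < b + k)) := by
  have h0 : (0 : ZMod (2*k)) = ((0:ℕ) : ZMod (2*k)) := by norm_num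
  rw [h0]
  have hne1 : ((0:ℕ) : ZMod (2*k)) ≠ (b : ZMod (2*k)) := fun h => by
    have := (cast_inj_aux (by omega) (by omega)).mp h; omega
  have hne2 : ((0:ℕ) : ZMod (2*k)) ≠ (c : ZMod (2*k)) := fun h => by
    have := (cast_inj_aux (by omega) (by omega)).mp h; omega
  have hne3 : ((b:ℕ) : ZMod (2*k)) ≠ (c : ZMod (2*k)) := fun h => by
    have := (cast_inj_aux (by omega) (by omega)).mp h; omega
  have hforall : (IsEdge (circPart k (i : ZMod (2*k)))
        {((0:ℕ) : ZMod (2*k)), (b : ZMod (2*k)), (c : ZMod (2*k))}) ↔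
      (∀ j ∈ ({0,1,2} : Finset (Fin 3)), (({((0:ℕ) : ZMod (2*k)), (b : ZMod (2*k)), (c : ZMod (2*k))} : Finset (ZMod (2*k))) ∩ circPart k (i : ZMod (2*k)) j).card = 1) := by
    constructor
    · intro h j _; exact h j
    · intro h j
      fin_cases j
      · exact h 0 (by decide)
      · exact h 1 (by decide)
      · exact h 2 (by decide)
  rw [hforall]
  simp only [Finset.mem_insert, Finset.mem_singleton, forall_eq_or_imp, forall_eq]
  rw [card_inter_triple hne1 hne2 hne3, card_inter_triple hne1 hne2 hne3,
    card_inter_triple hne1 hne2 hne3]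
  rw [show circPart k (i:ZMod (2*k)) 0 = {(i:ZMod (2*k)), (i:ZMod (2*k)) + (k:ZMod (2*k))} from rfl,
      show circPart k (i:ZMod (2*k)) 1 = (Finset.Ico 1 k).image (fun j : ℕ => (i:ZMod (2*k)) + (j : ZMod (2*k))) from rfl,
      show circPart k (i:ZMod (2*k)) 2 = (Finset.Ico (k+1) (2*k)).image (fun j : ℕ => (i:ZMod (2*k)) + (j : ZMod (2*k))) from rfl]
  simp only [mem_P0_aux hi (show (0:ℕ) < 2*k by omega), mem_P0_aux hi (show b < 2*k by omega),
    mem_P0_aux hi hc, mem_P1_aux hi (show (0:ℕ) < 2*k by omega),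
    mem_P1_aux hi (show b < 2*k by omega), mem_P1_aux hi hc,
    mem_P2_aux hi (show (0:ℕ) < 2*k by omega), mem_P2_aux hi (show b < 2*k by omega),
    mem_P2_aux hi hc]
  split_ifs <;> omega

/-- A 3-set `{0, b, c}` with `0 < b < k < c < 2k` and no opposite pair is an edge of exactly
three of the circular hypergraphs `H_0, …, H_{k-1}` if `k < c < k + b`, and exactly one
otherwise. -/
theorem stmt18 (k : ℕ) (hk : 2 ≤ k) (b c : ℕ)
    (hb0 : 0 < b) (hbk : b < k) (hkc : k < c) (hc : c < 2 * k) (hop : c ≠ b + k) :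
    (((Finset.range k).filter fun i : ℕ =>
        IsEdge (circPart k (i : ZMod (2 * k)))
          {(0 : ZMod (2 * k)), (b : ZMod (2 * k)), (c : ZMod (2 * k))}).card) =
      if k < c ∧ c < k + b then 3 else 1 := by
  have hfilter : ((Finset.range k).filter fun i : ℕ =>
        IsEdge (circPart k (i : ZMod (2 * k)))
          {(0 : ZMod (2 * k)), (b : ZMod (2 * k)), (c : ZMod (2 * k))}) =
      ((Finset.range k).filter fun i : ℕ => i = 0 ∨ ((i = b ∨ i + k = c) ∧ c < b + k)) := by
    apply Finset.filter_congr
    intro i hi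
    rw [Finset.mem_range] at hi
    exact edge_char hk hi hb0 hbk hkc hc
  rw [hfilter]
  by_cases hcb : c < b + k
  · rw [if_pos ⟨hkc, by omega⟩]
    have hset : ((Finset.range k).filter fun i : ℕ =>
        i = 0 ∨ ((i = b ∨ i + k = c) ∧ c < b + k)) = {0, b, c - k} := by
      ext i
      simp only [Finset.mem_filter, Finset.mem_range, Finset.mem_insert, Finset.mem_singleton]
      omega
    rw [hset, Finset.card_insert_of_notMem (by simp; omega),
      Finset.card_insert_of_notMem (by simp; omega), Finset.card_singleton]
  · rw [if_neg (by omega)]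
    have hset : ((Finset.range k).filter fun i : ℕ =>
        i = 0 ∨ ((i = b ∨ i + k = c) ∧ c < b + k)) = {0} := by
      ext i
      simp only [Finset.mem_filter, Finset.mem_range, Finset.mem_singleton]
      omega
    rw [hset, Finset.card_singleton]
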